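/- Let θ_1 < ... < θ_n be angles in (0, 2π) and ε ∈ {0,1}^n. For the linear map α^ε on real symmetric n×n matrices given by (α^ε Q)_{jk} = 2cos((θ_j − θ_k)/4 + (ε_j − ε_k)π/2)·q_{jk}, the determinant of α^ε is nonzero, and its sign equals (−1)^{σ(ε)} where σ(ε) is the parity of the number of pairs j < k with ε_j = 0 and ε_k = 1. -/

import Mathlib

open Matrix

/-- For `ε : Fin n → Bool`, number of pairs `j < k` with `ε j = false` and `ε k = true`. -/
def sigmaCount (n : ℕ) (ε : Fin n → Bool) : ℕ :=
  (Finset.univ.filter (fun p : Fin n × Fin n => p.1 < p.2 ∧ ε p.1 = false ∧ ε p.2 = true)).card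

/-- The space `Sym(n, ℝ)` of real symmetric `n × n` matrices. -/
def symMat (n : ℕ) : Submodule ℝ (Matrix (Fin n) (Fin n) ℝ) where
  carrier := {Q | Qᵀ = Q}
  add_mem' := by
    intro a b ha hb
    simp only [Set.mem_setOf_eq] at *
    rw [Matrix.transpose_add, ha, hb]
  zero_mem' := by simp
  smul_mem' := by
    intro c a ha
    simp only [Set.mem_setOf_eq] at *
    rw [Matrix.transpose_smul, ha]

/-- Entrywise rescaling of matrices by coefficients `c j k`, as a linear map. -/
def entryScale (n : ℕ) (c : Fin n → Fin n → ℝ) :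
    Matrix (Fin n) (Fin n) ℝ →ₗ[ℝ] Matrix (Fin n) (Fin n) ℝ where
  toFun Q := Matrix.of fun j k => c j k * Q j k
  map_add' a b := by ext j k; simp [mul_add]
  map_smul' t a := by ext j k; simp [Matrix.smul_apply]; ring

/-- The coefficients `2 cos((θ j − θ k)/4 + (ε j − ε k) π / 2)`. -/
noncomputable def alphaCoeff (n : ℕ) (θ : Fin n → ℝ) (ε : Fin n → Bool)
    (j k : Fin n) : ℝ :=
  2 * Real.cos ((θ j - θ k) / 4 +
    (((if ε j then 1 else 0) - (if ε k then 1 else 0) : ℝ)) * Real.pi / 2)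

lemma alphaCoeff_symm (n : ℕ) (θ : Fin n → ℝ) (ε : Fin n → Bool) (j k : Fin n) :
    alphaCoeff n θ ε k j = alphaCoeff n θ ε j k := by
  unfold alphaCoeff
  rw [show (θ k - θ j) / 4 +
      (((if ε k then 1 else 0) - (if ε j then 1 else 0) : ℝ)) * Real.pi / 2 =
      -((θ j - θ k) / 4 +
      (((if ε j then 1 else 0) - (if ε k then 1 else 0) : ℝ)) * Real.pi / 2) by ring,
    Real.cos_neg]

/-- The operator `α^ε` on the space of real symmetric matrices. -/
noncomputable def alphaEps (n : ℕ) (θ : Fin n → ℝ) (ε : Fin n → Bool) :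
    symMat n →ₗ[ℝ] symMat n :=
  (entryScale n (alphaCoeff n θ ε)).restrict (p := symMat n) (q := symMat n)
    (by
      intro Q hQ
      have hQ' : Qᵀ = Q := hQ
      show _ ∈ {Q : Matrix (Fin n) (Fin n) ℝ | Qᵀ = Q}
      ext j k
      show (entryScale n (alphaCoeff n θ ε) Q) k j = _
      show alphaCoeff n θ ε k j * Q k j = alphaCoeff n θ ε j k * Q j k
      rw [alphaCoeff_symm, show Q k j = Qᵀ j k from rfl, hQ'])

/-! ### Auxiliary material for `stmt_16` -/

abbrev SymIdx (n : ℕ) := {p : Fin n × Fin n // p.1 ≤ p.2}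

/-- Linear equivalence between symmetric matrices and functions on pairs `j ≤ k`. -/
noncomputable def symPiEquiv (n : ℕ) : symMat n ≃ₗ[ℝ] (SymIdx n → ℝ) where
  toFun Q p := (Q : Matrix (Fin n) (Fin n) ℝ) p.1.1 p.1.2
  map_add' a b := by funext p; simp [Matrix.add_apply]
  map_smul' t a := by funext p; simp [Matrix.smul_apply]
  invFun f := ⟨Matrix.of fun a b =>
      if h : a ≤ b then f ⟨(a, b), h⟩ else f ⟨(b, a), le_of_not_ge h⟩, by
    show _ = _
    ext a b
    show (if h : b ≤ a then f ⟨(b, a), h⟩ else f ⟨(a, b), le_of_not_ge h⟩)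
      = (if h : a ≤ b then f ⟨(a, b), h⟩ else f ⟨(b, a), le_of_not_ge h⟩)
    rcases le_or_gt a b with hab | hba
    · rcases le_or_gt b a with hba | _
      · have : a = b := le_antisymm hab hba
        subst this; rfl
      · rw [dif_neg (not_le.mpr ‹a < b›), dif_pos hab]
    · rw [dif_pos hba.le, dif_neg (not_le.mpr hba)]⟩
  left_inv Q := by
    apply Subtype.ext
    ext a b
    show (if h : a ≤ b then (Q : Matrix (Fin n) (Fin n) ℝ) a b
        else (Q : Matrix (Fin n) (Fin n) ℝ) b a) = (Q : Matrix (Fin n) (Fin n) ℝ) a b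
    split_ifs with h
    · rfl
    · have hQ : (Q : Matrix (Fin n) (Fin n) ℝ)ᵀ = Q := Q.2
      calc (Q : Matrix (Fin n) (Fin n) ℝ) b a
          = (Q : Matrix (Fin n) (Fin n) ℝ)ᵀ a b := rfl
        _ = (Q : Matrix (Fin n) (Fin n) ℝ) a b := by rw [hQ]
  right_inv f := by
    funext p
    show (if h : p.1.1 ≤ p.1.2 then f ⟨(p.1.1, p.1.2), h⟩
        else f ⟨(p.1.2, p.1.1), le_of_not_ge h⟩) = f p
    rw [dif_pos p.2]

/-- Diagonal scaling on a Pi type, as a linear map. -/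
def diagMap {ι : Type*} (c : ι → ℝ) : (ι → ℝ) →ₗ[ℝ] (ι → ℝ) where
  toFun f i := c i * f i
  map_add' a b := by funext i; simp [mul_add]
  map_smul' t a := by funext i; simp; ring

lemma det_diagMap {ι : Type*} [Fintype ι] [DecidableEq ι] (c : ι → ℝ) :
    LinearMap.det (diagMap c) = ∏ i, c i := by
  rw [← LinearMap.det_toMatrix (Pi.basisFun ℝ ι)]
  have : LinearMap.toMatrix (Pi.basisFun ℝ ι) (Pi.basisFun ℝ ι) (diagMap c)
      = Matrix.diagonal c := by
    ext i j
    rw [LinearMap.toMatrix_apply]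
    simp [diagMap, Pi.basisFun_apply, Matrix.diagonal, Pi.single_apply, eq_comm]
  rw [this, Matrix.det_diagonal]

lemma sign_mul' (a b : ℝ) : Real.sign (a * b) = Real.sign a * Real.sign b := by
  rcases lt_trichotomy a 0 with ha | ha | ha
  · rcases lt_trichotomy b 0 with hb | hb | hb
    · rw [Real.sign_of_pos (mul_pos_of_neg_of_neg ha hb), Real.sign_of_neg ha,
        Real.sign_of_neg hb]; ring
    · simp [hb, Real.sign_zero]
    · rw [Real.sign_of_neg (mul_neg_of_neg_of_pos ha hb), Real.sign_of_neg ha,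
        Real.sign_of_pos hb]; ring
  · simp [ha, Real.sign_zero]
  · rcases lt_trichotomy b 0 with hb | hb | hb
    · rw [Real.sign_of_neg (mul_neg_of_pos_of_neg ha hb), Real.sign_of_pos ha,
        Real.sign_of_neg hb]; ring
    · simp [hb, Real.sign_zero]
    · rw [Real.sign_of_pos (mul_pos ha hb), Real.sign_of_pos ha, Real.sign_of_pos hb]; ring

lemma sign_prod {ι : Type*} (s : Finset ι) (f : ι → ℝ) :
    Real.sign (∏ i ∈ s, f i) = ∏ i ∈ s, Real.sign (f i) := by
  classical
  induction s using Finset.induction_on with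
  | empty => simp [Real.sign_one]
  | insert _ _ h ih => rw [Finset.prod_insert h, Finset.prod_insert h, sign_mul', ih]

lemma alphaCoeff_neg (n : ℕ) (θ : Fin n → ℝ)
    (hθ0 : ∀ k, 0 < θ k) (hθ2 : ∀ k, θ k < 2 * Real.pi) (hmono : StrictMono θ)
    (ε : Fin n → Bool) {j k : Fin n} (hjk : j < k)
    (hj : ε j = false) (hk : ε k = true) : alphaCoeff n θ ε j k < 0 := by
  unfold alphaCoeff
  rw [hj, hk]
  have hx2 : (θ j - θ k) / 4 < 0 := by have := hmono hjk; linarith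
  have hx1 : -Real.pi < (θ j - θ k) / 4 := by
    have h1 := hθ0 j; have h2 := hθ2 k; have := Real.pi_pos; linarith
  have : (θ j - θ k) / 4 + ((if false then (1:ℝ) else 0) - (if true then (1:ℝ) else 0))
      * Real.pi / 2 = (θ j - θ k) / 4 - Real.pi / 2 := by simp; ring
  rw [this, Real.cos_sub_pi_div_two]
  have := Real.sin_neg_of_neg_of_neg_pi_lt hx2 hx1
  linarith

lemma alphaCoeff_pos (n : ℕ) (θ : Fin n → ℝ)
    (hθ0 : ∀ k, 0 < θ k) (hθ2 : ∀ k, θ k < 2 * Real.pi) (hmono : StrictMono θ)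
    (ε : Fin n → Bool) {j k : Fin n} (hjk : j ≤ k)
    (h' : ¬(j < k ∧ ε j = false ∧ ε k = true)) : 0 < alphaCoeff n θ ε j k := by
  rcases eq_or_lt_of_le hjk with rfl | hlt
  · unfold alphaCoeff
    have : (θ j - θ j) / 4 + ((if ε j then (1:ℝ) else 0) - (if ε j then (1:ℝ) else 0))
        * Real.pi / 2 = 0 := by ring
    rw [this, Real.cos_zero]; norm_num
  · have hx2 : (θ j - θ k) / 4 < 0 := by have := hmono hlt; linarith
    have hx1 : -(Real.pi / 2) < (θ j - θ k) / 4 := by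
      have h1 := hθ0 j; have h2 := hθ2 k; have := Real.pi_pos; linarith
    have hpi := Real.pi_pos
    unfold alphaCoeff
    cases hj : ε j <;> cases hk : ε k
    · have : (θ j - θ k) / 4 + ((if false then (1:ℝ) else 0) - (if false then (1:ℝ) else 0))
          * Real.pi / 2 = (θ j - θ k) / 4 := by simp
      rw [this]
      have := Real.cos_pos_of_mem_Ioo (x := (θ j - θ k) / 4) ⟨hx1, by linarith⟩
      linarith
    · exact absurd ⟨hlt, hj, hk⟩ h'
    · have : (θ j - θ k) / 4 + ((if true then (1:ℝ) else 0) - (if false then (1:ℝ) else 0))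
          * Real.pi / 2 = (θ j - θ k) / 4 + Real.pi / 2 := by simp
      rw [this, Real.cos_add_pi_div_two]
      have := Real.sin_neg_of_neg_of_neg_pi_lt hx2 (by linarith)
      linarith
    · have : (θ j - θ k) / 4 + ((if true then (1:ℝ) else 0) - (if true then (1:ℝ) else 0))
          * Real.pi / 2 = (θ j - θ k) / 4 := by simp
      rw [this]
      have := Real.cos_pos_of_mem_Ioo (x := (θ j - θ k) / 4) ⟨hx1, by linarith⟩
      linarith

theorem stmt_16 (n : ℕ) (θ : Fin n → ℝ)
    (hθ0 : ∀ k, 0 < θ k) (hθ2 : ∀ k, θ k < 2 * Real.pi) (hmono : StrictMono θ)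
    (ε : Fin n → Bool) :
    LinearMap.det (alphaEps n θ ε) ≠ 0 ∧
    Real.sign (LinearMap.det (alphaEps n θ ε)) = (-1 : ℝ) ^ sigmaCount n ε := by
  classical
  set c : SymIdx n → ℝ := fun p => alphaCoeff n θ ε p.1.1 p.1.2 with hc
  set e := symPiEquiv n with he
  have hconj : (e : symMat n →ₗ[ℝ] (SymIdx n → ℝ)) ∘ₗ (alphaEps n θ ε) ∘ₗ
      (e.symm : (SymIdx n → ℝ) →ₗ[ℝ] symMat n) = diagMap c := by
    apply LinearMap.ext
    intro f
    funext p
    show ((alphaEps n θ ε (e.symm f) : symMat n) : Matrix (Fin n) (Fin n) ℝ) p.1.1 p.1.2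
        = c p * f p
    have h1 : ((alphaEps n θ ε (e.symm f) : symMat n) : Matrix (Fin n) (Fin n) ℝ) p.1.1 p.1.2
        = alphaCoeff n θ ε p.1.1 p.1.2 *
          ((e.symm f : symMat n) : Matrix (Fin n) (Fin n) ℝ) p.1.1 p.1.2 := rfl
    have h2 : ((e.symm f : symMat n) : Matrix (Fin n) (Fin n) ℝ) p.1.1 p.1.2 = f p := by
      show (if h : p.1.1 ≤ p.1.2 then f ⟨(p.1.1, p.1.2), h⟩
          else f ⟨(p.1.2, p.1.1), le_of_not_ge h⟩) = f p
      rw [dif_pos p.2]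
    rw [h1, h2]
  have hdet : LinearMap.det (alphaEps n θ ε) = ∏ p : SymIdx n, c p := by
    rw [← LinearMap.det_conj (alphaEps n θ ε) e, hconj, det_diagMap]
  -- the negative set
  set P : SymIdx n → Prop := fun p => p.1.1 < p.1.2 ∧ ε p.1.1 = false ∧ ε p.1.2 = true with hP
  have hsigns : ∀ p : SymIdx n, if P p then c p < 0 else 0 < c p := by
    intro p
    by_cases h : P p
    · rw [if_pos h]
      exact alphaCoeff_neg n θ hθ0 hθ2 hmono ε h.1 h.2.1 h.2.2
    · rw [if_neg h]
      exact alphaCoeff_pos n θ hθ0 hθ2 hmono ε p.2 h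
  have hne : ∀ p : SymIdx n, c p ≠ 0 := by
    intro p
    have := hsigns p
    split_ifs at this with h
    · exact ne_of_lt this
    · exact (ne_of_lt this).symm
  have hcard : (Finset.univ.filter P).card = sigmaCount n ε := by
    unfold sigmaCount
    apply Finset.card_bij (fun p _ => p.1)
    · intro p hp
      simp only [Finset.mem_filter, Finset.mem_univ, true_and] at hp ⊢
      exact hp
    · intro p hp q hq hpq
      exact Subtype.ext hpq
    · intro q hq
      simp only [Finset.mem_filter, Finset.mem_univ, true_and] at hq
      refine ⟨⟨q, le_of_lt hq.1⟩, ?_, rfl⟩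
      simp only [Finset.mem_filter, Finset.mem_univ, true_and]
      exact hq
  constructor
  · rw [hdet]
    exact Finset.prod_ne_zero_iff.mpr (fun p _ => hne p)
  · rw [hdet, sign_prod]
    have : ∀ p : SymIdx n, Real.sign (c p) = if P p then (-1 : ℝ) else 1 := by
      intro p
      have := hsigns p
      split_ifs at this ⊢ with h
      · exact Real.sign_of_neg this
      · exact Real.sign_of_pos this
    rw [Finset.prod_congr rfl (fun p _ => this p)]
    rw [Finset.prod_ite, Finset.prod_const, Finset.prod_const, one_pow, mul_one, hcard]
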